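/- For every t ∈ ℝ, the integral ∫₀^∞ (e^{itu} − 1 − itu) · u^{−1} e^{−u} du converges absolutely, and exp( ∫₀^∞ (e^{itu} − 1 − itu) · u^{−1} e^{−u} du ) = e^{−it} / (1 − it). That is, the characteristic function of X = Y − 1, where Y has the exponential distribution with mean 1, has Lévy–Khintchine representation exp[∫₀^∞ (e^{itu} − 1 − itu) u^{−2} μ(du)] with Lévy measure μ(du) = u e^{−u} du on (0,∞). -/

import Mathlib

open MeasureTheory Set Filter

noncomputable section LKaux

private lemma lk_abs_exp_I_sub_one_le (x : ℝ) :
    ‖Complex.exp (x * Complex.I) - 1‖ ≤ 2 * |x| := by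
  rcases le_or_gt (|x|) 1 with h | h
  · have := Complex.norm_exp_sub_one_le (x := x * Complex.I) (by simpa using h)
    simpa using this
  · calc ‖Complex.exp (x * Complex.I) - 1‖
        ≤ ‖Complex.exp (x * Complex.I)‖ + ‖(1:ℂ)‖ := by
          simpa using
            norm_sub_le (Complex.exp (x * Complex.I)) 1
      _ = 2 := by rw [Complex.norm_exp_ofReal_mul_I]; norm_num
      _ ≤ 2 * |x| := by nlinarith

private lemma lk_cexp_integrableOn {z : ℂ} (hz : z.re < 0) :
    IntegrableOn (fun u : ℝ => Complex.exp (z * u)) (Set.Ioi 0) := by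
  have hb : IntegrableOn (fun u : ℝ => Real.exp (-(-z.re) * u)) (Set.Ioi 0) :=
    exp_neg_integrableOn_Ioi 0 (neg_pos.mpr hz)
  refine hb.mono' ?_ ?_
  · exact (Complex.continuous_exp.comp (by continuity)).aestronglyMeasurable
  · filter_upwards with u
    simp [Complex.norm_exp, le_refl]

private lemma lk_cexp_integral {z : ℂ} (hz : z.re < 0) :
    ∫ u in Set.Ioi (0 : ℝ), Complex.exp (z * u) = -z⁻¹ := by
  have hz0 : z ≠ 0 := fun h => by simp [h] at hz
  have hderiv : ∀ x ∈ Set.Ici (0 : ℝ),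
      HasDerivAt (fun u : ℝ => z⁻¹ * Complex.exp (z * u)) (Complex.exp (z * x)) x := by
    intro x _
    have hc : HasDerivAt (fun w : ℂ => Complex.exp (z * w)) (z * Complex.exp (z * x)) (x : ℂ) := by
      have h1 : HasDerivAt (fun w : ℂ => z * w) z (x : ℂ) := by
        simpa using (hasDerivAt_id (x : ℂ)).const_mul z
      simpa [mul_comm, Function.comp_def] using (Complex.hasDerivAt_exp (z * x)).comp (x : ℂ) h1
    have := (hc.comp_ofReal).const_mul z⁻¹
    simpa [← mul_assoc, inv_mul_cancel₀ hz0] using this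
  have htend : Tendsto (fun u : ℝ => z⁻¹ * Complex.exp (z * u)) atTop (nhds 0) := by
    rw [tendsto_zero_iff_norm_tendsto_zero]
    have heq : (fun u : ℝ => ‖z⁻¹ * Complex.exp (z * u)‖)
        = fun u : ℝ => ‖z⁻¹‖ * Real.exp (z.re * u) := by
      funext u; simp [Complex.norm_exp]
    rw [heq]
    have h2 : Tendsto (fun u : ℝ => z.re * u) atTop atBot := by
      simpa using Tendsto.const_mul_atTop_of_neg hz tendsto_id
    simpa using (Real.tendsto_exp_atBot.comp h2).const_mul (‖z⁻¹‖)
  have := integral_Ioi_of_hasDerivAt_of_tendsto' hderiv (lk_cexp_integrableOn hz) htend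
  simpa using this

private lemma lk_F_integrable (t : ℝ) :
    IntegrableOn
      (fun u : ℝ => (Complex.exp (Complex.I * t * u) - 1 - Complex.I * t * u) * (u : ℂ)⁻¹ *
        (Real.exp (-u) : ℂ)) (Set.Ioi 0) := by
  have hb : IntegrableOn (fun u : ℝ => 3 * |t| * Real.exp (-(1:ℝ) * u)) (Set.Ioi 0) :=
    (exp_neg_integrableOn_Ioi 0 one_pos).const_mul _
  refine hb.mono' ?_ ?_
  · apply Measurable.aestronglyMeasurable
    fun_prop
  · filter_upwards [ae_restrict_mem measurableSet_Ioi] with u hu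
    have hu0 : (0 : ℝ) < u := hu
    have key : ‖Complex.exp (Complex.I * t * u) - 1 - Complex.I * t * u‖
        ≤ 3 * |t| * u := by
      have harg : Complex.I * (t : ℂ) * (u : ℂ) = ((t * u : ℝ) : ℂ) * Complex.I := by
        push_cast; ring
      rw [harg]
      calc ‖Complex.exp ((t * u : ℝ) * Complex.I) - 1 - (t * u : ℝ) * Complex.I‖
          ≤ ‖Complex.exp ((t * u : ℝ) * Complex.I) - 1‖
              + ‖((t * u : ℝ) : ℂ) * Complex.I‖ := by
            simpa using
              norm_sub_le (Complex.exp ((t * u : ℝ) * Complex.I) - 1) ((t * u : ℝ) * Complex.I)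
        _ ≤ 2 * |t * u| + |t * u| := by
            have := lk_abs_exp_I_sub_one_le (t * u)
            simp only [norm_mul, Complex.norm_I, Complex.norm_real, Real.norm_eq_abs, mul_one, abs_mul] at this ⊢
            linarith
        _ = 3 * |t| * u := by rw [abs_mul, abs_of_pos hu0]; ring
    calc ‖(Complex.exp (Complex.I * t * u) - 1 - Complex.I * t * u) * (u : ℂ)⁻¹ *
            (Real.exp (-u) : ℂ)‖
        = ‖Complex.exp (Complex.I * t * u) - 1 - Complex.I * t * u‖ * u⁻¹ *
            Real.exp (-u) := by
          rw [norm_mul, norm_mul, norm_inv, Complex.norm_real,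
            Complex.norm_real, Real.norm_eq_abs, Real.norm_eq_abs, abs_of_pos hu0, abs_of_pos (Real.exp_pos _)]
      _ ≤ 3 * |t| * u * u⁻¹ * Real.exp (-u) := by
          have h1 : (0:ℝ) ≤ u⁻¹ := (inv_pos.mpr hu0).le
          have h2 : (0:ℝ) ≤ Real.exp (-u) := (Real.exp_pos _).le
          gcongr
      _ = 3 * |t| * Real.exp (-(1:ℝ) * u) := by
          rw [mul_assoc (3 * |t|), mul_inv_cancel₀ hu0.ne']; ring_nf

end LKaux


private lemma lk_hasDerivAt_inner (x : ℝ) (u : ℝ) :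
    HasDerivAt (fun s : ℝ => (Complex.exp (Complex.I * s * u) - 1 - Complex.I * s * u) *
        (u : ℂ)⁻¹ * (Real.exp (-u) : ℂ))
      ((Complex.I * u * Complex.exp (Complex.I * x * u) - Complex.I * u) * (u : ℂ)⁻¹ *
        (Real.exp (-u) : ℂ)) x := by
  have hlinC : HasDerivAt (fun w : ℂ => Complex.I * w * u) (Complex.I * u) (x : ℂ) := by
    have h : HasDerivAt (fun w : ℂ => Complex.I * u * w) (Complex.I * u) (x : ℂ) := by
      simpa using (hasDerivAt_id (x : ℂ)).const_mul (Complex.I * (u : ℂ))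
    have hfun : (fun w : ℂ => Complex.I * u * w) = fun w : ℂ => Complex.I * w * u := by
      funext w; ring
    rw [hfun] at h; exact h
  have hexpC : HasDerivAt (fun w : ℂ => Complex.exp (Complex.I * w * u))
      (Complex.exp (Complex.I * x * u) * (Complex.I * u)) (x : ℂ) :=
    (Complex.hasDerivAt_exp _).comp _ hlinC
  have hexp : HasDerivAt (fun s : ℝ => Complex.exp (Complex.I * s * u))
      (Complex.exp (Complex.I * x * u) * (Complex.I * u)) x := hexpC.comp_ofReal
  have hlin : HasDerivAt (fun s : ℝ => Complex.I * s * u) (Complex.I * u) x :=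
    hlinC.comp_ofReal
  have h := (((hexp.sub_const 1).sub hlin).mul_const ((u : ℂ)⁻¹)).mul_const
    ((Real.exp (-u) : ℝ) : ℂ)
  exact h.congr_deriv (by ring)

private lemma lk_integral_F' (x : ℝ) :
    ∫ u in Set.Ioi (0 : ℝ),
        (Complex.I * u * Complex.exp (Complex.I * x * u) - Complex.I * u) * (u : ℂ)⁻¹ *
          (Real.exp (-u) : ℂ)
      = Complex.I * (1 - Complex.I * x)⁻¹ - Complex.I := by
  have hre1 : (Complex.I * x - 1).re < 0 := by simp
  have hre2 : ((-1 : ℂ)).re < 0 := by norm_num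
  have hcong : ∀ u ∈ Set.Ioi (0 : ℝ),
      (Complex.I * u * Complex.exp (Complex.I * x * u) - Complex.I * u) * (u : ℂ)⁻¹ *
          (Real.exp (-u) : ℂ)
        = Complex.I * Complex.exp ((Complex.I * x - 1) * u)
            - Complex.I * Complex.exp ((-1 : ℂ) * u) := by
    intro u hu
    have hu0 : ((u : ℂ)) ≠ 0 := by
      exact_mod_cast (ne_of_gt (show (0:ℝ) < u from hu))
    have hr : ((Real.exp (-u) : ℝ) : ℂ) = Complex.exp ((-1 : ℂ) * u) := by
      rw [Complex.ofReal_exp]; push_cast; ring_nf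
    have hsplit : Complex.exp ((Complex.I * x - 1) * u)
        = Complex.exp (Complex.I * x * u) * Complex.exp ((-1 : ℂ) * u) := by
      rw [← Complex.exp_add]; ring_nf
    rw [hr, hsplit]
    field_simp
  rw [setIntegral_congr_fun measurableSet_Ioi hcong]
  have hi1 : IntegrableOn (fun u : ℝ => Complex.exp ((Complex.I * x - 1) * u)) (Set.Ioi 0) :=
    lk_cexp_integrableOn hre1
  have hi2 : IntegrableOn (fun u : ℝ => Complex.exp ((-1 : ℂ) * u)) (Set.Ioi 0) :=
    lk_cexp_integrableOn hre2
  rw [integral_sub (hi1.const_mul _) (hi2.const_mul _), integral_const_mul, integral_const_mul,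
    lk_cexp_integral hre1, lk_cexp_integral hre2]
  have : -(Complex.I * x - 1)⁻¹ = (1 - Complex.I * x)⁻¹ := by
    rw [← inv_neg, neg_sub]
  rw [this]
  norm_num

private lemma lk_hasDerivAt_F (x : ℝ) :
    HasDerivAt (fun s : ℝ => ∫ u in Set.Ioi (0 : ℝ),
        (Complex.exp (Complex.I * s * u) - 1 - Complex.I * s * u) * (u : ℂ)⁻¹ *
          (Real.exp (-u) : ℂ))
      (Complex.I * (1 - Complex.I * x)⁻¹ - Complex.I) x := by
  have key := hasDerivAt_integral_of_dominated_loc_of_deriv_le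
    (F := fun (s : ℝ) (u : ℝ) =>
      (Complex.exp (Complex.I * s * u) - 1 - Complex.I * s * u) * (u : ℂ)⁻¹ *
        (Real.exp (-u) : ℂ))
    (F' := fun (s : ℝ) (u : ℝ) =>
      (Complex.I * u * Complex.exp (Complex.I * s * u) - Complex.I * u) * (u : ℂ)⁻¹ *
        (Real.exp (-u) : ℂ))
    (μ := volume.restrict (Set.Ioi 0))
    (bound := fun u => 2 * Real.exp (-u)) (x₀ := x) (Metric.ball_mem_nhds x one_pos)
    (Filter.Eventually.of_forall fun s => by
      apply Measurable.aestronglyMeasurable; fun_prop)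
    (lk_F_integrable x)
    (by apply Measurable.aestronglyMeasurable; fun_prop)
    ?_ ?_ ?_
  · exact (lk_integral_F' x) ▸ key.2
  · -- bound
    filter_upwards [ae_restrict_mem measurableSet_Ioi] with u hu s _
    have hu0 : (0 : ℝ) < u := hu
    have habs : ‖Complex.exp (Complex.I * s * u)‖ = 1 := by
      rw [Complex.norm_exp]
      simp
    have h2 : ‖Complex.exp (Complex.I * s * u) - 1‖ ≤ 2 := by
      calc ‖Complex.exp (Complex.I * s * u) - 1‖
          ≤ ‖Complex.exp (Complex.I * s * u)‖ + ‖(1:ℂ)‖ := by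
            simpa using
              norm_sub_le (Complex.exp (Complex.I * s * u)) 1
        _ = 2 := by rw [habs]; norm_num
    have heq : (Complex.I * u * Complex.exp (Complex.I * s * u) - Complex.I * u) * (u : ℂ)⁻¹ *
        (Real.exp (-u) : ℂ)
          = Complex.I * u * (Complex.exp (Complex.I * s * u) - 1) * (u : ℂ)⁻¹ *
            (Real.exp (-u) : ℂ) := by ring
    rw [heq, norm_mul, norm_mul, norm_mul, norm_mul, norm_inv,
      Complex.norm_real, Complex.norm_real, Real.norm_eq_abs, Real.norm_eq_abs, Complex.norm_I, abs_of_pos hu0,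
      abs_of_pos (Real.exp_pos _)]
    rw [one_mul]
    calc u * ‖Complex.exp (Complex.I * s * u) - 1‖ * u⁻¹ * Real.exp (-u)
        ≤ u * 2 * u⁻¹ * Real.exp (-u) := by
          have := (Real.exp_pos (-u)).le
          gcongr
      _ = 2 * Real.exp (-u) := by
          field_simp
  · -- bound integrable
    have h := (exp_neg_integrableOn_Ioi (0:ℝ) one_pos).const_mul (2:ℝ)
    simpa using h
  · -- differentiability
    filter_upwards with u s _
    exact lk_hasDerivAt_inner s u

private lemma lk_hasDerivAt_g (x : ℝ) :
    HasDerivAt (fun s : ℝ => -Complex.log (1 - Complex.I * s) - Complex.I * s)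
      (Complex.I * (1 - Complex.I * x)⁻¹ - Complex.I) x := by
  have h0 : HasDerivAt (fun s : ℝ => Complex.I * (s : ℂ)) Complex.I x := by
    have hc : HasDerivAt (fun w : ℂ => Complex.I * w) Complex.I (x : ℂ) := by
      simpa using (hasDerivAt_id (x : ℂ)).const_mul Complex.I
    exact hc.comp_ofReal
  have h1 : HasDerivAt (fun s : ℝ => 1 - Complex.I * s) (-Complex.I) x := h0.const_sub 1
  have hslit : (1 - Complex.I * x) ∈ Complex.slitPlane := by
    rw [Complex.mem_slitPlane_iff]
    left
    simp
  have h2 := h1.clog_real hslit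
  have h3 := h2.neg.sub h0
  exact h3.congr_deriv (by rw [div_eq_mul_inv]; ring)

theorem levy_khintchine_centered_exponential (t : ℝ) :
    IntegrableOn
      (fun u : ℝ => (Complex.exp (Complex.I * t * u) - 1 - Complex.I * t * u) * (u : ℂ)⁻¹ *
        (Real.exp (-u) : ℂ)) (Set.Ioi 0)
    ∧ Complex.exp (∫ u in Set.Ioi (0 : ℝ),
          (Complex.exp (Complex.I * t * u) - 1 - Complex.I * t * u) * (u : ℂ)⁻¹ *
            (Real.exp (-u) : ℂ))
        = Complex.exp (-(Complex.I * t)) / (1 - Complex.I * t) := by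
  refine ⟨lk_F_integrable t, ?_⟩
  set F : ℝ → ℂ := fun s : ℝ => ∫ u in Set.Ioi (0 : ℝ),
      (Complex.exp (Complex.I * s * u) - 1 - Complex.I * s * u) * (u : ℂ)⁻¹ *
        (Real.exp (-u) : ℂ) with hF
  set g : ℝ → ℂ := fun s : ℝ => -Complex.log (1 - Complex.I * s) - Complex.I * s with hg
  have hdiff : Differentiable ℝ (fun s => F s - g s) :=
    fun x => ((lk_hasDerivAt_F x).sub (lk_hasDerivAt_g x)).differentiableAt
  have hderiv0 : ∀ x : ℝ, deriv (fun s => F s - g s) x = 0 := fun x => by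
    rw [HasDerivAt.deriv (f := fun s => F s - g s) ((lk_hasDerivAt_F x).sub (lk_hasDerivAt_g x))]; ring
  have hconst := is_const_of_deriv_eq_zero hdiff hderiv0 t 0
  have hF0 : F 0 = 0 := by
    rw [hF]
    simp
  have hg0 : g 0 = 0 := by
    rw [hg]
    simp
  have hFt : F t = g t := by
    have := hconst
    rw [hF0, hg0] at this
    linear_combination this
  show Complex.exp (F t) = _
  rw [hFt]
  simp only [hg]
  have hz : (1 - Complex.I * t) ≠ 0 := by
    intro h
    have := congrArg Complex.re h
    simp at this
  have : -Complex.log (1 - Complex.I * t) - Complex.I * t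
      = -(Complex.I * t) - Complex.log (1 - Complex.I * t) := by ring
  rw [this, Complex.exp_sub, Complex.exp_log hz]
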